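/- arXiv:2401.04721 — 6 statements merged into one kernel-verified Lean document; each statement's English description precedes it below -/
import Mathlib

section
/- Fix c₀ ≠ 0, ε ∈ {−1, 1}, and 𝔥 : [−1, 1] → ℝ. Suppose x : I → ℝ is twice differentiable at s₀ with x(s₀) = 0 and 0 < x'(s₀)² < 1, and that x satisfies at s₀ the helicoidal prescribed mean curvature equation 2(c₀²x'² + x²)^{3/2}·𝔥(xx'/√(c₀²x'² + x²)) = −ε·(x''(x³ + c₀²x) − (1 − x'²)(x² + 2c₀²x'²))/√(1 − x'²). Then ε𝔥(0) > 0 and x'(s₀) = ±1/√(1 + c₀²𝔥(0)²). -/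
/-- If the profile curve of a helicoidal `𝔥`-surface meets the
rotation axis (`x(s₀) = 0`, `0 < x'(s₀)² < 1`) and satisfies the helicoidal
prescribed mean curvature ODE at `s₀`, then `ε𝔥(0) > 0` and
`x'(s₀) = ±1/√(1 + c₀²𝔥(0)²)`. -/
theorem helicoidal_meets_axis (c₀ ε : ℝ) (hc₀ : c₀ ≠ 0) (hε : ε = 1 ∨ ε = -1)
    (𝔥 : ℝ → ℝ) (x : ℝ → ℝ) (s₀ x' x'' : ℝ)
    (hd1 : HasDerivAt x x' s₀) (hd2 : HasDerivAt (deriv x) x'' s₀)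
    (hx0 : x s₀ = 0) (hx'pos : 0 < x' ^ 2) (hx'lt : x' ^ 2 < 1)
    (hode :
      2 * (c₀ ^ 2 * x' ^ 2 + (x s₀) ^ 2) ^ ((3 : ℝ) / 2) *
          𝔥 (x s₀ * x' / Real.sqrt (c₀ ^ 2 * x' ^ 2 + (x s₀) ^ 2))
        = -ε * ((x'' * ((x s₀) ^ 3 + c₀ ^ 2 * x s₀)
            - (1 - x' ^ 2) * ((x s₀) ^ 2 + 2 * c₀ ^ 2 * x' ^ 2))
              / Real.sqrt (1 - x' ^ 2))) :
    0 < ε * 𝔥 0 ∧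
      (x' = 1 / Real.sqrt (1 + c₀ ^ 2 * (𝔥 0) ^ 2) ∨
       x' = -(1 / Real.sqrt (1 + c₀ ^ 2 * (𝔥 0) ^ 2))) := by
  have hx'2 : (0:ℝ) < 1 - x' ^ 2 := by linarith
  have ha : (0:ℝ) < c₀ ^ 2 * x' ^ 2 := by positivity
  set p := Real.sqrt (1 - x' ^ 2) with hp
  have hp0 : 0 < p := Real.sqrt_pos.mpr hx'2
  have hp2 : p ^ 2 = 1 - x' ^ 2 := Real.sq_sqrt hx'2.le
  set q := Real.sqrt (c₀ ^ 2 * x' ^ 2) with hq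
  have hq0 : 0 < q := Real.sqrt_pos.mpr ha
  have hq2 : q ^ 2 = c₀ ^ 2 * x' ^ 2 := Real.sq_sqrt ha.le
  have hε2 : ε ^ 2 = 1 := by rcases hε with h | h <;> simp [h]
  have h32 : (c₀ ^ 2 * x' ^ 2) ^ ((3:ℝ)/2) = q ^ 3 := by
    rw [hq, Real.sqrt_eq_rpow, ← Real.rpow_natCast ((c₀ ^ 2 * x' ^ 2) ^ ((1:ℝ)/2)) 3,
      ← Real.rpow_mul ha.le]
    norm_num
  rw [hx0] at hode
  norm_num [h32] at hode
  -- hode : 2 * q ^ 3 * 𝔥 0 = -ε * (-(( 1 - x'^2) * (2 * c₀^2 * x'^2)) / p)  (some form)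
  have hkey : q * 𝔥 0 = ε * p := by
    have h1 : 2 * q ^ 3 * 𝔥 0 * p = ε * (2 * q ^ 2 * p ^ 2) := by
      field_simp at hode
      linear_combination 2 * hode - 2 * ε * p ^ 2 * hq2 - 2 * ε * (c₀ ^ 2 * x' ^ 2) * hp2
    have h2 : (q * 𝔥 0 - ε * p) * (2 * q ^ 2 * p) = 0 := by linear_combination h1
    have h3 : (2 : ℝ) * q ^ 2 * p ≠ 0 := by positivity
    rcases mul_eq_zero.mp h2 with h | h
    · linarith
    · exact absurd h h3
  have hq𝔥 : q * (ε * 𝔥 0) = p := by linear_combination ε * hkey + p * hε2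
  have hpos : 0 < ε * 𝔥 0 := by nlinarith [hq𝔥, hq0, hp0]
  refine ⟨hpos, ?_⟩
  have hD : (0:ℝ) < 1 + c₀ ^ 2 * (𝔥 0) ^ 2 := by positivity
  have hsq : x' ^ 2 * (1 + c₀ ^ 2 * (𝔥 0) ^ 2) = 1 := by
    have h4 : q ^ 2 * (𝔥 0) ^ 2 = ε ^ 2 * p ^ 2 := by
      linear_combination (q * 𝔥 0 + ε * p) * hkey
    rw [hq2, hε2] at h4
    linear_combination h4 + hp2
  have hb2 : (1 / Real.sqrt (1 + c₀ ^ 2 * (𝔥 0) ^ 2)) ^ 2 = 1 / (1 + c₀ ^ 2 * (𝔥 0) ^ 2) := by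
    rw [div_pow, one_pow, Real.sq_sqrt hD.le]
  set b := 1 / Real.sqrt (1 + c₀ ^ 2 * (𝔥 0) ^ 2) with hbdef
  have hxb : x' ^ 2 = b ^ 2 := by
    rw [hb2, eq_div_iff hD.ne']
    exact hsq
  have h5 : (x' - b) * (x' + b) = 0 := by linear_combination hxb
  rcases mul_eq_zero.mp h5 with h | h
  · left; linarith
  · right; linarith
end

section
/- Fix c₀ ≠ 0, ε ∈ {−1, 1}, and a continuous function 𝔥 : [−1, 1] → ℝ that is even, i.e. 𝔥(−t) = 𝔥(t) for all t ∈ [−1, 1]. If γ(s) = (x(s), y(s)) : I → ℝ² is differentiable, with x(s) ≠ 0 and |y(s)| < 1 for all s ∈ I, and γ solves the helicoidal ODE system (x, y)' = Φ(x, y), then s ↦ (x(−s), −y(−s)) also solves the same system on −I; consequently every orbit of the system is symmetric with respect to the axis y = 0. -/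
/-- The vector field of the helicoidal prescribed mean curvature ODE system
`(x, y)' = Φ(x, y)`. -/
noncomputable def helicoidalField (c₀ ε : ℝ) (𝔥 : ℝ → ℝ) (p : ℝ × ℝ) : ℝ × ℝ :=
  (p.2,
    ((1 - p.2 ^ 2) * (p.1 ^ 2 + 2 * c₀ ^ 2 * p.2 ^ 2)
        - 2 * ε * 𝔥 (p.1 * p.2 / Real.sqrt (c₀ ^ 2 * p.2 ^ 2 + p.1 ^ 2))
          * Real.sqrt (1 - p.2 ^ 2) * (c₀ ^ 2 * p.2 ^ 2 + p.1 ^ 2) ^ ((3 : ℝ) / 2))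
      / (p.1 ^ 3 + c₀ ^ 2 * p.1))

/-- If `𝔥` is even and `γ = (x, y)` solves the helicoidal ODE
system on `I` (with `x ≠ 0`, `|y| < 1` on `I`), then `s ↦ (x(−s), −y(−s))`
also solves the same system on `−I`; hence every orbit is symmetric with
respect to the axis `y = 0`. -/
theorem helicoidal_system_orbit_symmetric (c₀ ε : ℝ) (hc₀ : c₀ ≠ 0)
    (hε : ε = 1 ∨ ε = -1) (𝔥 : ℝ → ℝ)
    (hcont : ContinuousOn 𝔥 (Set.Icc (-1) 1))
    (heven : ∀ t ∈ Set.Icc (-1 : ℝ) 1, 𝔥 (-t) = 𝔥 t)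
    (I : Set ℝ) (x y : ℝ → ℝ)
    (hx0 : ∀ s ∈ I, x s ≠ 0) (hy1 : ∀ s ∈ I, |y s| < 1)
    (hsol : ∀ s ∈ I,
      HasDerivAt (fun t => (x t, y t)) (helicoidalField c₀ ε 𝔥 (x s, y s)) s) :
    ∀ s : ℝ, -s ∈ I →
      HasDerivAt (fun t => (x (-t), -y (-t)))
        (helicoidalField c₀ ε 𝔥 (x (-s), -y (-s))) s := by
  intro s hs
  have h := hsol (-s) hs
  set X := x (-s)
  set Y := y (-s)
  -- component derivatives
  have hx : HasDerivAt x (helicoidalField c₀ ε 𝔥 (X, Y)).1 (-s) :=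
    h.fst
  have hy : HasDerivAt y (helicoidalField c₀ ε 𝔥 (X, Y)).2 (-s) :=
    h.snd
  have hneg : HasDerivAt (fun t : ℝ => -t) (-1) s := (hasDerivAt_id s).neg
  have hx' : HasDerivAt (fun t => x (-t))
      ((helicoidalField c₀ ε 𝔥 (X, Y)).1 * (-1)) s := hx.comp s hneg
  have hy' : HasDerivAt (fun t => -y (-t))
      (-((helicoidalField c₀ ε 𝔥 (X, Y)).2 * (-1))) s := (hy.comp s hneg).neg
  have key : helicoidalField c₀ ε 𝔥 (X, -Y)
      = ((helicoidalField c₀ ε 𝔥 (X, Y)).1 * (-1),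
         -((helicoidalField c₀ ε 𝔥 (X, Y)).2 * (-1))) := by
    have hXne : X ≠ 0 := hx0 (-s) hs
    have hYlt : |Y| < 1 := hy1 (-s) hs
    have hsq : Real.sqrt (c₀ ^ 2 * Y ^ 2 + X ^ 2) ≥ |X| := by
      rw [ge_iff_le, ← Real.sqrt_sq_eq_abs]
      exact Real.sqrt_le_sqrt (by nlinarith [sq_nonneg (c₀ * Y)])
    have hXpos : (0:ℝ) < |X| := abs_pos.2 hXne
    have hspos : 0 < Real.sqrt (c₀ ^ 2 * Y ^ 2 + X ^ 2) := lt_of_lt_of_le hXpos hsq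
    have harg : |X * Y / Real.sqrt (c₀ ^ 2 * Y ^ 2 + X ^ 2)| ≤ 1 := by
      rw [abs_div, abs_mul, abs_of_pos hspos, div_le_one hspos]
      calc |X| * |Y| ≤ |X| * 1 := by nlinarith
        _ = |X| := mul_one _
        _ ≤ _ := hsq
    have hmem : X * Y / Real.sqrt (c₀ ^ 2 * Y ^ 2 + X ^ 2) ∈ Set.Icc (-1:ℝ) 1 :=
      abs_le.1 harg |>.imp (fun h => h) (fun h => h) |> fun ⟨a,b⟩ => ⟨a,b⟩
    have hh : 𝔥 (X * -Y / Real.sqrt (c₀ ^ 2 * Y ^ 2 + X ^ 2))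
        = 𝔥 (X * Y / Real.sqrt (c₀ ^ 2 * Y ^ 2 + X ^ 2)) := by
      have : X * -Y / Real.sqrt (c₀ ^ 2 * Y ^ 2 + X ^ 2)
          = -(X * Y / Real.sqrt (c₀ ^ 2 * Y ^ 2 + X ^ 2)) := by ring
      rw [this]
      exact heven _ hmem
    simp only [helicoidalField, neg_sq, hh, Prod.mk.injEq]
    constructor <;> ring
  rw [show helicoidalField c₀ ε 𝔥 (x (-s), -y (-s)) = helicoidalField c₀ ε 𝔥 (X, -Y) from rfl,
    key]
  exact hx'.prodMk hy'
end

section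
/- Fix c₀ ≠ 0, ε ∈ {−1, 1}, and a continuous function 𝔥 : [−1, 1] → ℝ. A point (x₀, y₀) ∈ Θ_ε = (0, ∞) × (−1, 1) satisfies Φ(x₀, y₀) = (0, 0) if and only if y₀ = 0 and 2ε𝔥(0)x₀ = 1. In particular, the system has an equilibrium in Θ_ε if and only if ε𝔥(0) > 0, in which case the equilibrium is unique and equals e₀ = (1/(2ε𝔥(0)), 0). -/
lemma key (c₀ ε x : ℝ) (hc₀ : c₀ ≠ 0) (hx : 0 < x) (𝔥 : ℝ → ℝ) :
    helicoidalField c₀ ε 𝔥 (x, 0) = (0, 0) ↔ 2 * ε * 𝔥 0 * x = 1 := by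
  have hden : x ^ 3 + c₀ ^ 2 * x ≠ 0 := by positivity
  have hsq : Real.sqrt (c₀ ^ 2 * 0 ^ 2 + x ^ 2) = x := by
    rw [show c₀ ^ 2 * 0 ^ 2 + x ^ 2 = x ^ 2 by ring, Real.sqrt_sq hx.le]
  have hrpow : (c₀ ^ 2 * 0 ^ 2 + x ^ 2) ^ ((3 : ℝ) / 2) = x ^ 3 := by
    rw [show c₀ ^ 2 * 0 ^ 2 + x ^ 2 = x ^ 2 by ring, ← Real.rpow_natCast x 2,
      ← Real.rpow_mul hx.le, ← Real.rpow_natCast x 3]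
    norm_num
  simp only [helicoidalField, Prod.mk.injEq, hsq, hrpow]
  rw [mul_zero, zero_div, div_eq_zero_iff]
  have hone : Real.sqrt (1 - (0 : ℝ) ^ 2) = 1 := by norm_num
  rw [hone]
  constructor
  · rintro ⟨-, h | h⟩
    · have h2 : x ^ 2 * (1 - 2 * ε * 𝔥 0 * x) = 0 := by linear_combination h
      rcases mul_eq_zero.1 h2 with h3 | h3
      · exact absurd h3 (by positivity)
      · linarith
    · exact absurd h hden
  · intro h
    exact ⟨trivial, Or.inl (by linear_combination (-(x ^ 2)) * h)⟩

/-- A point `(x₀, y₀)` of the phase space `Θ_ε = (0,∞) × (−1,1)`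
is an equilibrium of the helicoidal system iff `y₀ = 0` and `2ε𝔥(0)x₀ = 1`;
the system has an equilibrium in `Θ_ε` iff `ε𝔥(0) > 0`, in which case it is
unique and equals `e₀ = (1/(2ε𝔥(0)), 0)`. -/
theorem helicoidal_equilibrium (c₀ ε : ℝ) (hc₀ : c₀ ≠ 0) (hε : ε = 1 ∨ ε = -1)
    (𝔥 : ℝ → ℝ) (hcont : ContinuousOn 𝔥 (Set.Icc (-1) 1)) :
    (∀ x₀ y₀ : ℝ, 0 < x₀ → y₀ ∈ Set.Ioo (-1 : ℝ) 1 →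
      (helicoidalField c₀ ε 𝔥 (x₀, y₀) = (0, 0) ↔ y₀ = 0 ∧ 2 * ε * 𝔥 0 * x₀ = 1)) ∧
    ((∃ p ∈ (Set.Ioi (0 : ℝ)) ×ˢ (Set.Ioo (-1 : ℝ) 1),
        helicoidalField c₀ ε 𝔥 p = (0, 0)) ↔ 0 < ε * 𝔥 0) ∧
    (0 < ε * 𝔥 0 → ∀ p ∈ (Set.Ioi (0 : ℝ)) ×ˢ (Set.Ioo (-1 : ℝ) 1),
      (helicoidalField c₀ ε 𝔥 p = (0, 0) ↔ p = (1 / (2 * ε * 𝔥 0), 0))) := by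
  have hmain : ∀ x₀ y₀ : ℝ, 0 < x₀ → y₀ ∈ Set.Ioo (-1 : ℝ) 1 →
      (helicoidalField c₀ ε 𝔥 (x₀, y₀) = (0, 0) ↔ y₀ = 0 ∧ 2 * ε * 𝔥 0 * x₀ = 1) := by
    intro x₀ y₀ hx hy
    constructor
    · intro h
      have hy0 : y₀ = 0 := congrArg Prod.fst h
      subst hy0
      exact ⟨rfl, (key c₀ ε x₀ hc₀ hx 𝔥).1 h⟩
    · rintro ⟨rfl, h⟩
      exact (key c₀ ε x₀ hc₀ hx 𝔥).2 h
  refine ⟨hmain, ?_, ?_⟩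
  · constructor
    · rintro ⟨⟨x, y⟩, ⟨hx, hy⟩, hp⟩
      obtain ⟨-, h⟩ := (hmain x y hx hy).1 hp
      rw [Set.mem_Ioi] at hx
      nlinarith
    · intro hpos
      have h2 : 0 < 2 * ε * 𝔥 0 := by nlinarith
      refine ⟨(1 / (2 * ε * 𝔥 0), 0), ⟨by simpa using one_div_pos.2 h2, by norm_num⟩, ?_⟩
      exact (hmain _ 0 (one_div_pos.2 h2) (by norm_num)).2 ⟨rfl, by field_simp [left_ne_zero_of_mul hpos.ne', right_ne_zero_of_mul hpos.ne']⟩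
  · rintro hpos ⟨x, y⟩ ⟨hx, hy⟩
    rw [Set.mem_Ioi] at hx
    rw [hmain x y hx hy, Prod.mk.injEq]
    have h2 : 2 * ε * 𝔥 0 ≠ 0 := by nlinarith
    constructor
    · rintro ⟨rfl, h⟩
      refine ⟨?_, rfl⟩
      field_simp [left_ne_zero_of_mul hpos.ne', right_ne_zero_of_mul hpos.ne']
      linarith
    · rintro ⟨rfl, rfl⟩
      refine ⟨rfl, ?_⟩
      field_simp [left_ne_zero_of_mul hpos.ne', right_ne_zero_of_mul hpos.ne']
end

section
/- Fix c₀ ≠ 0 and let 𝔥 ∈ C¹([−1, 1]) be positive, even (𝔥(−t) = 𝔥(t) for all t), and increasing on [0, 1] (so 𝔥'(t) ≥ 0 for t ∈ [0, 1] and 𝔥'(t) ≤ 0 for t ∈ [−1, 0]). Define F₂(u, v) := 2𝔥(v)u² − (u + c₀²v²)·√(u(1 − v²) − c₀²v²) on the open set Ω := {(u, v) ∈ ℝ² : u > 0, v²(u + c₀²) < u} (on which u(1 − v²) − c₀²v² > 0). Then 0 is a regular value of F₂ on Ω: at every (u, v) ∈ Ω with F₂(u, v) = 0, the gradient (∂F₂/∂u,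 ∂F₂/∂v)(u, v) is nonzero. -/
open Filter Set Topology

lemma mono_deriv_nonneg' {f : ℝ → ℝ} {x b d : ℝ} (hx : x < b)
    (hm : MonotoneOn f (Set.Icc x b)) (hd : HasDerivAt f d x) : 0 ≤ d := by
  have h1 : Tendsto (slope f x) (𝓝[>] x) (𝓝 d) :=
    (hasDerivAt_iff_tendsto_slope.1 hd).mono_left
      (nhdsWithin_mono x fun y hy => ne_of_gt hy)
  refine ge_of_tendsto h1 ?_
  filter_upwards [Ioo_mem_nhdsGT_of_mem ⟨le_refl x, hx⟩] with y hy
  have h2 : f x ≤ f y := hm ⟨le_refl x, hx.le⟩ ⟨hy.1.le, hy.2.le⟩ hy.1.le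
  rw [slope_def_field]
  exact div_nonneg (by linarith) (by linarith [hy.1])

/-- With `𝔥 ∈ C¹([−1,1])` positive, even and increasing on
`[0,1]`, `0` is a regular value of
`F₂(u,v) = 2𝔥(v)u² − (u + c₀²v²)√(u(1 − v²) − c₀²v²)` on
`Ω = {u > 0, v²(u + c₀²) < u}` (where `u(1 − v²) − c₀²v² > 0`): at every zero
of `F₂` in `Ω` the gradient `(∂F₂/∂u, ∂F₂/∂v)` is nonzero. -/
theorem helicoidal_F2_regular_value (c₀ : ℝ) (hc₀ : c₀ ≠ 0) (𝔥 : ℝ → ℝ)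
    (hC1 : ContDiffOn ℝ 1 𝔥 (Set.Icc (-1) 1))
    (hpos : ∀ t ∈ Set.Icc (-1 : ℝ) 1, 0 < 𝔥 t)
    (heven : ∀ t ∈ Set.Icc (-1 : ℝ) 1, 𝔥 (-t) = 𝔥 t)
    (hmono : MonotoneOn 𝔥 (Set.Icc 0 1)) :
    let F₂ : ℝ → ℝ → ℝ := fun u v =>
      2 * 𝔥 v * u ^ 2
        - (u + c₀ ^ 2 * v ^ 2) * Real.sqrt (u * (1 - v ^ 2) - c₀ ^ 2 * v ^ 2)
    let Ω : Set (ℝ × ℝ) := {p | 0 < p.1 ∧ p.2 ^ 2 * (p.1 + c₀ ^ 2) < p.1}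
    ∀ p ∈ Ω,
      0 < p.1 * (1 - p.2 ^ 2) - c₀ ^ 2 * p.2 ^ 2 ∧
      (F₂ p.1 p.2 = 0 →
        (deriv (fun u => F₂ u p.2) p.1, deriv (fun v => F₂ p.1 v) p.2)
          ≠ ((0 : ℝ), (0 : ℝ))) := by
  intro F₂ Ω p hp
  obtain ⟨hu, hΩ⟩ := hp
  set u := p.1 with hu_def
  set v := p.2 with hv_def
  have ha : (0:ℝ) < c₀ ^ 2 := by positivity
  have hR : 0 < u * (1 - v ^ 2) - c₀ ^ 2 * v ^ 2 := by nlinarith [sq_nonneg v]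
  refine ⟨hR, ?_⟩
  intro hF0 heq
  have hv2 : v ^ 2 < 1 := by nlinarith [sq_nonneg v]
  have hv1 : -1 < v := by nlinarith [sq_nonneg (v + 1)]
  have hv1' : v < 1 := by nlinarith [sq_nonneg (v - 1)]
  set s : ℝ := Real.sqrt (u * (1 - v ^ 2) - c₀ ^ 2 * v ^ 2) with hs_def
  have hs : 0 < s := Real.sqrt_pos.2 hR
  have hs2 : s ^ 2 = u * (1 - v ^ 2) - c₀ ^ 2 * v ^ 2 := Real.sq_sqrt hR.le
  -- differentiability of 𝔥 at v
  have hnhds : Set.Icc (-1:ℝ) 1 ∈ 𝓝 v := Icc_mem_nhds hv1 hv1'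
  have hdiff : DifferentiableAt ℝ 𝔥 v :=
    (hC1.differentiableOn one_ne_zero).differentiableAt hnhds
  -- sign of v * 𝔥'(v)
  have hvH : 0 ≤ v * deriv 𝔥 v := by
    rcases lt_trichotomy v 0 with hv0 | hv0 | hv0
    · have hnhds' : Set.Icc (-1:ℝ) 1 ∈ 𝓝 (-v) := Icc_mem_nhds (by linarith) (by linarith)
      have hdiff2 : DifferentiableAt ℝ 𝔥 (-v) :=
        (hC1.differentiableOn one_ne_zero).differentiableAt hnhds'
      have heq_loc : 𝔥 =ᶠ[𝓝 v] fun t => 𝔥 (-t) := by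
        filter_upwards [hnhds] with t ht
        exact (heven t ht).symm
      have hcomp : HasDerivAt (fun t => 𝔥 (-t)) (deriv 𝔥 (-v) * (-1)) v := by
        have := hdiff2.hasDerivAt.comp v (hasDerivAt_neg v)
        simpa [Function.comp_def] using this
      have hED : HasDerivAt 𝔥 (deriv 𝔥 (-v) * (-1)) v :=
        hcomp.congr_of_eventuallyEq heq_loc
      have hdp : 0 ≤ deriv 𝔥 (-v) :=
        mono_deriv_nonneg' (b := 1) (by linarith)
          (hmono.mono (Set.Icc_subset_Icc_left (by linarith))) hdiff2.hasDerivAt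
      rw [hED.deriv]
      nlinarith
    · simp [hv0]
    · have hdp : 0 ≤ deriv 𝔥 v :=
        mono_deriv_nonneg' (b := 1) hv1'
          (hmono.mono (Set.Icc_subset_Icc_left hv0.le)) hdiff.hasDerivAt
      positivity
  -- derivative in the u-direction
  have HU : HasDerivAt (fun x : ℝ => 2 * 𝔥 v * x ^ 2
      - (x + c₀ ^ 2 * v ^ 2) * Real.sqrt (x * (1 - v ^ 2) - c₀ ^ 2 * v ^ 2))
      ((2 * 𝔥 v) * ((2:ℕ) * u ^ (2-1)) -
        ((1:ℝ) * s + (u + c₀ ^ 2 * v ^ 2) *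
          (1 * (1 - v ^ 2) / (2 * s)))) u := by
    have h2 := (((hasDerivAt_id u).mul_const (1 - v ^ 2)).sub_const
      (c₀ ^ 2 * v ^ 2)).sqrt hR.ne'
    have h3 := ((hasDerivAt_id u).add_const (c₀ ^ 2 * v ^ 2)).mul h2
    exact (HasDerivAt.const_mul (2 * 𝔥 v) (hasDerivAt_pow 2 u)).sub h3
  -- derivative in the v-direction
  have HV : HasDerivAt (fun y : ℝ => 2 * 𝔥 y * u ^ 2
      - (u + c₀ ^ 2 * y ^ 2) * Real.sqrt (u * (1 - y ^ 2) - c₀ ^ 2 * y ^ 2))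
      ((2 * deriv 𝔥 v) * u ^ 2 -
        ((0 + c₀ ^ 2 * ((2:ℕ) * v ^ (2-1))) * s + (u + c₀ ^ 2 * v ^ 2) *
          ((u * (-((2:ℕ) * v ^ (2-1))) - c₀ ^ 2 * ((2:ℕ) * v ^ (2-1))) / (2 * s)))) v := by
    have i1 := (hasDerivAt_pow 2 v).const_sub 1
    have i2 := i1.const_mul u
    have i3 := (hasDerivAt_pow 2 v).const_mul (c₀ ^ 2)
    have i4 := i2.sub i3
    have i5 := i4.sqrt hR.ne'
    have j1 := (hasDerivAt_const v u).add i3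
    have j2 := j1.mul i5
    exact ((hdiff.hasDerivAt.const_mul 2).mul_const (u ^ 2)).sub j2
  -- extract the two scalar equations
  simp only [Prod.mk.injEq] at heq
  obtain ⟨hA0, hB0⟩ := heq
  have hA : (2 * 𝔥 v) * ((2:ℕ) * u ^ (2-1)) -
      ((1:ℝ) * s + (u + c₀ ^ 2 * v ^ 2) * (1 * (1 - v ^ 2) / (2 * s))) = 0 := by
    rw [← HU.deriv]; exact hA0
  have hB : (2 * deriv 𝔥 v) * u ^ 2 -
      ((0 + c₀ ^ 2 * ((2:ℕ) * v ^ (2-1))) * s + (u + c₀ ^ 2 * v ^ 2) *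
        ((u * (-((2:ℕ) * v ^ (2-1))) - c₀ ^ 2 * ((2:ℕ) * v ^ (2-1))) / (2 * s))) = 0 := by
    rw [← HV.deriv]; exact hB0
  have hF : 2 * 𝔥 v * u ^ 2 - (u + c₀ ^ 2 * v ^ 2) * s = 0 := hF0
  -- clear denominators
  have hsne : s ≠ 0 := hs.ne'
  clear hA0 hB0 hF0 hnhds hdiff hC1 hpos heven hmono hc₀
  clear_value u v s
  clear hs_def hu_def hv_def F₂ Ω p
  have key1 : 8 * 𝔥 v * u * s = 2 * s ^ 2 + (u + c₀ ^ 2 * v ^ 2) * (1 - v ^ 2) := by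
    field_simp at hA
    push_cast at hA
    linear_combination hA
  have key2 : 2 * deriv 𝔥 v * u ^ 2 * s =
      2 * c₀ ^ 2 * v * s ^ 2 - v * (u + c₀ ^ 2) * (u + c₀ ^ 2 * v ^ 2) := by
    field_simp at hB
    push_cast at hB
    linear_combination hB / 2
  -- key identity (u + 3 a v²) s² = a v² (u + a v²)
  have e3 : (u + 3 * c₀ ^ 2 * v ^ 2) * s ^ 2 =
      c₀ ^ 2 * v ^ 2 * (u + c₀ ^ 2 * v ^ 2) := by
    linear_combination u * key1 - 4 * s * hF - (u + c₀ ^ 2 * v ^ 2) * hs2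
  -- the v-equation multiplied by v, combined with the sign of v 𝔥'
  have hL : 0 ≤ 2 * deriv 𝔥 v * u ^ 2 * s * v := by
    have := mul_nonneg hvH (by positivity : (0:ℝ) ≤ 2 * u ^ 2 * s)
    nlinarith [this]
  have key2v : 2 * deriv 𝔥 v * u ^ 2 * s * v =
      2 * c₀ ^ 2 * v ^ 2 * s ^ 2 - v ^ 2 * (u + c₀ ^ 2) * (u + c₀ ^ 2 * v ^ 2) := by
    linear_combination v * key2
  have hii : 0 ≤ 2 * c₀ ^ 2 * v ^ 2 * s ^ 2 -
      v ^ 2 * (u + c₀ ^ 2) * (u + c₀ ^ 2 * v ^ 2) := by linarith [hL, key2v]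
  rcases eq_or_ne v 0 with hv0 | hv0
  · have e4 : u * s ^ 2 = 0 := by
      rw [hv0] at e3; linear_combination e3
    have : 0 < u * s ^ 2 := by positivity
    linarith
  · have hw : 0 < v ^ 2 := by positivity
    have hP : 0 < u + 3 * c₀ ^ 2 * v ^ 2 := by positivity
    have h6 : 0 ≤ (2 * c₀ ^ 2 * v ^ 2 * s ^ 2 -
        v ^ 2 * (u + c₀ ^ 2) * (u + c₀ ^ 2 * v ^ 2)) * (u + 3 * c₀ ^ 2 * v ^ 2) :=
      mul_nonneg hii hP.le
    have e3' : 2 * c₀ ^ 2 * v ^ 2 * ((u + 3 * c₀ ^ 2 * v ^ 2) * s ^ 2) =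
        2 * c₀ ^ 2 * v ^ 2 * (c₀ ^ 2 * v ^ 2 * (u + c₀ ^ 2 * v ^ 2)) := by
      linear_combination 2 * c₀ ^ 2 * v ^ 2 * e3
    have h7 : 0 ≤ 2 * c₀ ^ 2 * v ^ 2 * (c₀ ^ 2 * v ^ 2 * (u + c₀ ^ 2 * v ^ 2)) -
        v ^ 2 * (u + c₀ ^ 2) * (u + c₀ ^ 2 * v ^ 2) * (u + 3 * c₀ ^ 2 * v ^ 2) := by
      linarith [h6, e3']
    have h_upaw : 0 < u + c₀ ^ 2 * v ^ 2 := by positivity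
    have h_quart : 0 < u ^ 2 + 3 * c₀ ^ 2 * u * v ^ 2 + c₀ ^ 2 * u + (c₀ ^ 2) ^ 2 * v ^ 2 := by
      positivity
    have hid : 2 * c₀ ^ 2 * v ^ 2 * (c₀ ^ 2 * v ^ 2 * (u + c₀ ^ 2 * v ^ 2)) -
        v ^ 2 * (u + c₀ ^ 2) * (u + c₀ ^ 2 * v ^ 2) * (u + 3 * c₀ ^ 2 * v ^ 2) =
        -(v ^ 2 * (u + c₀ ^ 2 * v ^ 2) *
          (u ^ 2 + 3 * c₀ ^ 2 * u * v ^ 2 + c₀ ^ 2 * u + (c₀ ^ 2) ^ 2 * v ^ 2)) := by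
      ring
    linarith [h7, hid, mul_pos (mul_pos hw h_upaw) h_quart]
end

section
/- Fix c₀ ≠ 0 and define G : Θ₁ → ℝ², G(x, y) = (x², xy/√(x² + c₀²y²)), where Θ₁ = (0, ∞) × (−1, 1). Then: (i) G is injective on Θ₁; (ii) G is differentiable on Θ₁ and its Jacobian determinant at (x, y) equals 2x⁴/(x² + c₀²y²)^{3/2}, which is positive; (iii) the image of Θ₁ under G equals {(u, v) ∈ ℝ² : u > 0, v²(u + c₀²) < u}; and (iv) for every (x, y) ∈ Θ₁, writing (u, v) = G(x, y), one has u − c₀²v² = x⁴/(x² + c₀²y²) > 0. -/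
open Real

private lemma hcv_vderiv (c₀ x y : ℝ) (hx : 0 < x) :
    HasDerivAt (fun t => x * t / Real.sqrt (x ^ 2 + c₀ ^ 2 * t ^ 2))
      (x ^ 3 / (x ^ 2 + c₀ ^ 2 * y ^ 2) ^ ((3:ℝ)/2)) y := by
  have hD : 0 < x ^ 2 + c₀ ^ 2 * y ^ 2 := by positivity
  have hs : 0 < Real.sqrt (x ^ 2 + c₀ ^ 2 * y ^ 2) := Real.sqrt_pos.mpr hD
  have h1 : HasDerivAt (fun t : ℝ => x ^ 2 + c₀ ^ 2 * t ^ 2) (c₀ ^ 2 * (2 * y)) y := by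
    simpa using ((hasDerivAt_pow 2 y).const_mul (c₀ ^ 2)).const_add (x ^ 2)
  have h2 := h1.sqrt hD.ne'
  have h3 : HasDerivAt (fun t : ℝ => x * t) x y := by
    simpa using (hasDerivAt_id y).const_mul x
  have h4 := h3.div h2 hs.ne'
  have hpow : (x ^ 2 + c₀ ^ 2 * y ^ 2) ^ ((3:ℝ)/2)
      = Real.sqrt (x ^ 2 + c₀ ^ 2 * y ^ 2) ^ 3 := by
    rw [← Real.rpow_natCast (Real.sqrt _) 3, Real.sqrt_eq_rpow, ← Real.rpow_mul hD.le]
    norm_num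
  refine h4.congr_deriv (Eq.symm ?_)
  rw [hpow]
  set s := Real.sqrt (x ^ 2 + c₀ ^ 2 * y ^ 2) with hsdef
  have hs2 : s ^ 2 = x ^ 2 + c₀ ^ 2 * y ^ 2 := Real.sq_sqrt hD.le
  field_simp
  linear_combination (-1) * hs2

private lemma hcv_vsq (c₀ x y : ℝ) (hx : 0 < x) :
    (x * y / Real.sqrt (x ^ 2 + c₀ ^ 2 * y ^ 2)) ^ 2
      = x ^ 2 * y ^ 2 / (x ^ 2 + c₀ ^ 2 * y ^ 2) := by
  have hD : (0:ℝ) < x ^ 2 + c₀ ^ 2 * y ^ 2 := by positivity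
  rw [div_pow, mul_pow, Real.sq_sqrt hD.le]

/-- Properties of the change of variables
`G(x, y) = (x², xy/√(x² + c₀²y²))` on the phase space `Θ₁ = (0,∞) × (−1,1)`:
injectivity, differentiability with positive Jacobian determinant
`2x⁴/(x² + c₀²y²)^{3/2}`, the image `{u > 0, v²(u + c₀²) < u}`, and the
identity `u − c₀²v² = x⁴/(x² + c₀²y²) > 0`. -/
theorem helicoidal_change_of_variables (c₀ : ℝ) (hc₀ : c₀ ≠ 0) :
    let Θ₁ : Set (ℝ × ℝ) := Set.Ioi 0 ×ˢ Set.Ioo (-1) 1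
    let G : ℝ × ℝ → ℝ × ℝ := fun p =>
      (p.1 ^ 2, p.1 * p.2 / Real.sqrt (p.1 ^ 2 + c₀ ^ 2 * p.2 ^ 2))
    Set.InjOn G Θ₁ ∧
    (∀ p ∈ Θ₁,
      DifferentiableAt ℝ G p ∧
      deriv (fun t => (G (t, p.2)).1) p.1 * deriv (fun t => (G (p.1, t)).2) p.2
          - deriv (fun t => (G (p.1, t)).1) p.2 * deriv (fun t => (G (t, p.2)).2) p.1
        = 2 * p.1 ^ 4 / (p.1 ^ 2 + c₀ ^ 2 * p.2 ^ 2) ^ ((3 : ℝ) / 2) ∧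
      0 < 2 * p.1 ^ 4 / (p.1 ^ 2 + c₀ ^ 2 * p.2 ^ 2) ^ ((3 : ℝ) / 2)) ∧
    G '' Θ₁ = {q : ℝ × ℝ | 0 < q.1 ∧ q.2 ^ 2 * (q.1 + c₀ ^ 2) < q.1} ∧
    (∀ p ∈ Θ₁,
      (G p).1 - c₀ ^ 2 * (G p).2 ^ 2 = p.1 ^ 4 / (p.1 ^ 2 + c₀ ^ 2 * p.2 ^ 2) ∧
      0 < (G p).1 - c₀ ^ 2 * (G p).2 ^ 2) := by
  intro Θ₁ G
  have hc2 : 0 < c₀ ^ 2 := by positivity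
  have hmem : ∀ x y : ℝ, (x, y) ∈ Θ₁ ↔ 0 < x ∧ -1 < y ∧ y < 1 := by
    intro x y
    simp [Θ₁, Set.mem_prod, Set.mem_Ioi, Set.mem_Ioo, and_assoc]
  refine ⟨?_, ?_, ?_, ?_⟩
  · -- injectivity
    rintro ⟨x, y⟩ hp ⟨x', y'⟩ hq hGpq
    obtain ⟨hx, hy1, hy2⟩ := (hmem _ _).1 hp
    obtain ⟨hx', _, _⟩ := (hmem _ _).1 hq
    have h1 : x ^ 2 = x' ^ 2 := congrArg Prod.fst hGpq
    have hxx : x = x' := by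
      rw [← Real.sqrt_sq hx.le, ← Real.sqrt_sq hx'.le, h1]
    subst hxx
    have h2 : x * y / Real.sqrt (x ^ 2 + c₀ ^ 2 * y ^ 2)
        = x * y' / Real.sqrt (x ^ 2 + c₀ ^ 2 * y' ^ 2) := congrArg Prod.snd hGpq
    have hmono : StrictMono (fun t => x * t / Real.sqrt (x ^ 2 + c₀ ^ 2 * t ^ 2)) := by
      apply strictMono_of_deriv_pos
      intro t
      rw [(hcv_vderiv c₀ x t hx).deriv]
      positivity
    have : y = y' := hmono.injective h2
    rw [this]
  · -- differentiability + Jacobian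
    rintro ⟨x, y⟩ hp
    obtain ⟨hx, hy1, hy2⟩ := (hmem _ _).1 hp
    have hD : 0 < x ^ 2 + c₀ ^ 2 * y ^ 2 := by positivity
    have hs : 0 < Real.sqrt (x ^ 2 + c₀ ^ 2 * y ^ 2) := Real.sqrt_pos.mpr hD
    refine ⟨?_, ?_, by positivity⟩
    · have hinner : DifferentiableAt ℝ (fun p : ℝ × ℝ => p.1 ^ 2 + c₀ ^ 2 * p.2 ^ 2) (x, y) :=
        (differentiableAt_fst.pow 2).add ((differentiableAt_snd.pow 2).const_mul _)
      have hsqrt : DifferentiableAt ℝ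
          (fun p : ℝ × ℝ => Real.sqrt (p.1 ^ 2 + c₀ ^ 2 * p.2 ^ 2)) (x, y) :=
        hinner.sqrt hD.ne'
      have h2nd : DifferentiableAt ℝ
          (fun p : ℝ × ℝ => p.1 * p.2 / Real.sqrt (p.1 ^ 2 + c₀ ^ 2 * p.2 ^ 2)) (x, y) := by
        have : DifferentiableAt ℝ
            (fun p : ℝ × ℝ => p.1 * p.2 * (Real.sqrt (p.1 ^ 2 + c₀ ^ 2 * p.2 ^ 2))⁻¹) (x, y) :=
          (differentiableAt_fst.mul differentiableAt_snd).mul (hsqrt.inv hs.ne')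
        simpa [div_eq_mul_inv] using this
      exact DifferentiableAt.prodMk (differentiableAt_fst.pow 2) h2nd
    · have e1 : deriv (fun t => (G (t, y)).1) x = 2 * x := by
        simp only [G]
        simp [deriv_pow_field]
      have e2 : deriv (fun t => (G (x, t)).2) y
          = x ^ 3 / (x ^ 2 + c₀ ^ 2 * y ^ 2) ^ ((3:ℝ)/2) := by
        simp only [G]
        exact (hcv_vderiv c₀ x y hx).deriv
      have e3 : deriv (fun t => (G (x, t)).1) y = 0 := by
        simp only [G]
        exact deriv_const y _
      rw [e1, e2, e3, zero_mul, sub_zero]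
      ring
  · -- image
    ext ⟨u, v⟩
    simp only [Set.mem_image, Set.mem_setOf_eq]
    constructor
    · rintro ⟨⟨x, y⟩, hp, hGp⟩
      obtain ⟨hx, hy1, hy2⟩ := (hmem _ _).1 hp
      have hD : 0 < x ^ 2 + c₀ ^ 2 * y ^ 2 := by positivity
      have hu : u = x ^ 2 := (congrArg Prod.fst hGp).symm
      have hv : v = x * y / Real.sqrt (x ^ 2 + c₀ ^ 2 * y ^ 2) :=
        (congrArg Prod.snd hGp).symm
      have hv2 : v ^ 2 = x ^ 2 * y ^ 2 / (x ^ 2 + c₀ ^ 2 * y ^ 2) := by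
        rw [hv]; exact hcv_vsq c₀ x y hx
      refine ⟨by rw [hu]; positivity, ?_⟩
      rw [hu, hv2, div_mul_eq_mul_div, div_lt_iff₀ hD]
      nlinarith [mul_pos (pow_pos hx 4) (show (0:ℝ) < 1 - y ^ 2 by nlinarith)]
    · rintro ⟨hu, hv⟩
      have hv1 : c₀ ^ 2 * v ^ 2 < u := by nlinarith [sq_nonneg v]
      have hdpos : 0 < u - c₀ ^ 2 * v ^ 2 := by linarith
      set s := Real.sqrt (u - c₀ ^ 2 * v ^ 2) with hsdef
      have hs : 0 < s := Real.sqrt_pos.mpr hdpos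
      have hs2 : s ^ 2 = u - c₀ ^ 2 * v ^ 2 := Real.sq_sqrt hdpos.le
      set x := Real.sqrt u with hxdef
      have hx : 0 < x := Real.sqrt_pos.mpr hu
      have hx2 : x ^ 2 = u := Real.sq_sqrt hu.le
      refine ⟨(x, v * x / s), (hmem _ _).2 ⟨hx, ?_, ?_⟩, ?_⟩
      · -- -1 < y
        have hy2lt : (v * x / s) ^ 2 < 1 := by
          rw [div_pow, div_lt_one (by positivity), mul_pow, hx2, hs2]
          nlinarith
        nlinarith [sq_nonneg (v * x / s + 1)]
      · have hy2lt : (v * x / s) ^ 2 < 1 := by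
          rw [div_pow, div_lt_one (by positivity), mul_pow, hx2, hs2]
          nlinarith
        nlinarith [sq_nonneg (v * x / s - 1)]
      · -- G (x, y) = (u, v)
        have hDval : x ^ 2 + c₀ ^ 2 * (v * x / s) ^ 2 = (u / s) ^ 2 := by
          field_simp
          linear_combination (s^2 + c₀^2*v^2) * hx2 + u * hs2
        have hsqrtD : Real.sqrt (x ^ 2 + c₀ ^ 2 * (v * x / s) ^ 2) = u / s := by
          rw [hDval, Real.sqrt_sq (by positivity)]
        simp only [G]
        refine Prod.ext ?_ ?_
        · simpa using hx2
        · simp only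
          rw [hsqrtD]
          field_simp
          linear_combination v * hx2
  · -- identity
    rintro ⟨x, y⟩ hp
    obtain ⟨hx, hy1, hy2⟩ := (hmem _ _).1 hp
    have hD : 0 < x ^ 2 + c₀ ^ 2 * y ^ 2 := by positivity
    have hv2 := hcv_vsq c₀ x y hx
    constructor
    · simp only [G]
      rw [hv2]
      field_simp
      ring
    · simp only [G]
      rw [hv2]
      have : x ^ 2 - c₀ ^ 2 * (x ^ 2 * y ^ 2 / (x ^ 2 + c₀ ^ 2 * y ^ 2))
          = x ^ 4 / (x ^ 2 + c₀ ^ 2 * y ^ 2) := by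
        field_simp; ring
      rw [this]
      positivity
end

section
/- Fix c₀ ≠ 0 and let 𝔥 ∈ C¹([−1, 1]) with 𝔥(0) > 0 and 𝔥'(0) = 0 (e.g. 𝔥 even). Consider the vector field Φ of the helicoidal ODE system with ε = 1 and its equilibrium e₀ = (1/(2𝔥(0)), 0). Then Φ is differentiable at e₀ and its derivative at e₀ is the linear map of ℝ² with matrix [[0, 1], [−4𝔥(0)²/(1 + 4c₀²𝔥(0)²), 0]]; in particular this matrix has trace 0 and determinant 4𝔥(0)²/(1 + 4c₀²𝔥(0)²) > 0, so its eigenvalues are the purely imaginary numbers ±(2𝔥(0)/√(1 + 4c₀²𝔥(0)²))·i. -/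
set_option maxHeartbeats 1000000


open ContinuousLinearMap in
theorem helicoidal_hasFDerivAt (c₀ : ℝ) (𝔥 : ℝ → ℝ)
    (hC1 : ContDiffOn ℝ 1 𝔥 (Set.Icc (-1) 1))
    (h0 : 0 < 𝔥 0) (hd0 : deriv 𝔥 0 = 0) :
    HasFDerivAt (helicoidalField c₀ 1 𝔥)
      ((ContinuousLinearMap.snd ℝ ℝ ℝ).prod
        ((-(4 * 𝔥 0 ^ 2 / (1 + 4 * c₀ ^ 2 * 𝔥 0 ^ 2))) • ContinuousLinearMap.fst ℝ ℝ ℝ))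
      ((1 / (2 * 𝔥 0), 0) : ℝ × ℝ) := by
  have h0' : 𝔥 0 ≠ 0 := ne_of_gt h0
  set x₀ : ℝ := 1 / (2 * 𝔥 0) with hx₀def
  have hx₀ : 0 < x₀ := by rw [hx₀def]; positivity
  set pt : ℝ × ℝ := (x₀, 0) with hptdef
  set L₁ : ℝ × ℝ →L[ℝ] ℝ := ContinuousLinearMap.fst ℝ ℝ ℝ with hL₁
  set L₂ : ℝ × ℝ →L[ℝ] ℝ := ContinuousLinearMap.snd ℝ ℝ ℝ with hL₂
  have hsq : Real.sqrt (x₀ ^ 2) = x₀ := Real.sqrt_sq hx₀.le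
  have h32 : (x₀ ^ 2 : ℝ) ^ ((3 : ℝ) / 2) = x₀ ^ 3 := by
    rw [show ((3 : ℝ) / 2) = (3 : ℕ) * ((1 : ℝ) / 2) by norm_num, Real.rpow_mul (by positivity),
      Real.rpow_natCast, ← Real.sqrt_eq_rpow, show ((x₀ ^ 2 : ℝ) ^ 3) = (x₀ ^ 3) ^ 2 by ring,
      Real.sqrt_sq (by positivity)]
  have h12 : (x₀ ^ 2 : ℝ) ^ ((3 : ℝ) / 2 - 1) = x₀ := by
    rw [show ((3 : ℝ) / 2 - 1) = (1 : ℝ) / 2 by norm_num, ← Real.sqrt_eq_rpow, hsq]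
  -- basic pieces
  have hfst : HasFDerivAt (fun p : ℝ × ℝ => p.1) L₁ pt := hasFDerivAt_fst
  have hsnd : HasFDerivAt (fun p : ℝ × ℝ => p.2) L₂ pt := hasFDerivAt_snd
  have h2y : HasFDerivAt (fun p : ℝ × ℝ => p.2 ^ 2) (0 : ℝ × ℝ →L[ℝ] ℝ) pt :=
    ((hasDerivAt_pow 2 (0 : ℝ)).comp_hasFDerivAt_of_eq pt hsnd rfl).congr_fderiv
      (by refine ContinuousLinearMap.ext fun p => ?_; simp)
  have h2x : HasFDerivAt (fun p : ℝ × ℝ => p.1 ^ 2) ((2 * x₀) • L₁) pt :=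
    ((hasDerivAt_pow 2 x₀).comp_hasFDerivAt_of_eq pt hfst rfl).congr_fderiv
      (by refine ContinuousLinearMap.ext fun p => ?_; simp)
  -- w = c₀² y² + x²
  have hw : HasFDerivAt (fun p : ℝ × ℝ => c₀ ^ 2 * p.2 ^ 2 + p.1 ^ 2) ((2 * x₀) • L₁) pt :=
    ((h2y.const_mul (c₀ ^ 2)).add h2x).congr_fderiv
      (by refine ContinuousLinearMap.ext fun p => ?_; simp)
  have hwpt : c₀ ^ 2 * (pt.2) ^ 2 + (pt.1) ^ 2 = x₀ ^ 2 := by simp [hptdef]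
  -- s = sqrt w
  have hs : HasFDerivAt (fun p : ℝ × ℝ => Real.sqrt (c₀ ^ 2 * p.2 ^ 2 + p.1 ^ 2)) L₁ pt :=
    (hw.sqrt (by rw [hwpt]; positivity)).congr_fderiv
      (by refine ContinuousLinearMap.ext fun p => ?_
          simp [hsq, hptdef]
          try field_simp
          try ring)
  -- s⁻¹
  have hsinv : HasFDerivAt (fun p : ℝ × ℝ =>
      (Real.sqrt (c₀ ^ 2 * p.2 ^ 2 + p.1 ^ 2))⁻¹) ((-(x₀ ^ 2)⁻¹) • L₁) pt :=
    ((hasDerivAt_inv (x := x₀) hx₀.ne').comp_hasFDerivAt_of_eq pt hs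
      (by rw [hwpt, hsq])).congr_fderiv
      (by refine ContinuousLinearMap.ext fun p => ?_; simp)
  -- u = x y * s⁻¹
  have hmul : HasFDerivAt (fun p : ℝ × ℝ => p.1 * p.2) (x₀ • L₂) pt :=
    (hfst.mul hsnd).congr_fderiv
      (by refine ContinuousLinearMap.ext fun p => ?_; simp [hptdef])
  have hu : HasFDerivAt (fun p : ℝ × ℝ =>
      p.1 * p.2 * (Real.sqrt (c₀ ^ 2 * p.2 ^ 2 + p.1 ^ 2))⁻¹) L₂ pt :=
    (hmul.mul hsinv).congr_fderiv
      (by refine ContinuousLinearMap.ext fun p => ?_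
          simp [hsq, hptdef]
          try field_simp
          try ring)
  -- g = 𝔥 ∘ u
  have hdiff : DifferentiableAt ℝ 𝔥 0 :=
    ((hC1.differentiableOn one_ne_zero) 0 (by norm_num)).differentiableAt
      (Icc_mem_nhds (by norm_num) (by norm_num))
  have hg : HasFDerivAt (fun p : ℝ × ℝ =>
      𝔥 (p.1 * p.2 * (Real.sqrt (c₀ ^ 2 * p.2 ^ 2 + p.1 ^ 2))⁻¹)) (0 : ℝ × ℝ →L[ℝ] ℝ) pt :=
    (hdiff.hasDerivAt.comp_hasFDerivAt_of_eq pt hu (by simp [hptdef])).congr_fderiv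
      (by rw [hd0, zero_smul])
  -- q = sqrt (1 - y²)
  have hone : HasFDerivAt (fun p : ℝ × ℝ => 1 - p.2 ^ 2) (0 : ℝ × ℝ →L[ℝ] ℝ) pt :=
    ((hasFDerivAt_const (1 : ℝ) pt).sub h2y).congr_fderiv (by simp)
  have hq : HasFDerivAt (fun p : ℝ × ℝ => Real.sqrt (1 - p.2 ^ 2)) (0 : ℝ × ℝ →L[ℝ] ℝ) pt :=
    (hone.sqrt (by norm_num)).congr_fderiv (by simp)
  -- r = w ^ (3/2)
  have hr : HasFDerivAt (fun p : ℝ × ℝ =>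
      (c₀ ^ 2 * p.2 ^ 2 + p.1 ^ 2) ^ ((3 : ℝ) / 2)) ((3 * x₀ ^ 2) • L₁) pt :=
    (hw.rpow_const (p := (3 : ℝ) / 2) (Or.inr (by norm_num))).congr_fderiv
      (by refine ContinuousLinearMap.ext fun p => ?_
          simp [h12, hptdef, ← Real.sqrt_eq_rpow, hsq]
          ring)
  -- numerator pieces
  have hB : HasFDerivAt (fun p : ℝ × ℝ => p.1 ^ 2 + 2 * c₀ ^ 2 * p.2 ^ 2) ((2 * x₀) • L₁) pt :=
    (h2x.add (h2y.const_mul (2 * c₀ ^ 2))).congr_fderiv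
      (by refine ContinuousLinearMap.ext fun p => ?_; simp)
  have hAB : HasFDerivAt (fun p : ℝ × ℝ =>
      (1 - p.2 ^ 2) * (p.1 ^ 2 + 2 * c₀ ^ 2 * p.2 ^ 2)) ((2 * x₀) • L₁) pt :=
    (hone.mul hB).congr_fderiv
      (by refine ContinuousLinearMap.ext fun p => ?_; simp [hptdef])
  have hC1' : HasFDerivAt (fun p : ℝ × ℝ =>
      2 * 1 * 𝔥 (p.1 * p.2 * (Real.sqrt (c₀ ^ 2 * p.2 ^ 2 + p.1 ^ 2))⁻¹))
      (0 : ℝ × ℝ →L[ℝ] ℝ) pt :=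
    (hg.const_mul (2 * 1)).congr_fderiv (by simp)
  have hC2 : HasFDerivAt (fun p : ℝ × ℝ =>
      2 * 1 * 𝔥 (p.1 * p.2 * (Real.sqrt (c₀ ^ 2 * p.2 ^ 2 + p.1 ^ 2))⁻¹)
        * Real.sqrt (1 - p.2 ^ 2)) (0 : ℝ × ℝ →L[ℝ] ℝ) pt :=
    (hC1'.mul hq).congr_fderiv (by simp)
  have hC3 : HasFDerivAt (fun p : ℝ × ℝ =>
      2 * 1 * 𝔥 (p.1 * p.2 * (Real.sqrt (c₀ ^ 2 * p.2 ^ 2 + p.1 ^ 2))⁻¹)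
        * Real.sqrt (1 - p.2 ^ 2) * (c₀ ^ 2 * p.2 ^ 2 + p.1 ^ 2) ^ ((3 : ℝ) / 2))
      ((6 * 𝔥 0 * x₀ ^ 2) • L₁) pt :=
    (hC2.mul hr).congr_fderiv
      (by refine ContinuousLinearMap.ext fun p => ?_
          simp [hptdef]
          ring)
  have hN : HasFDerivAt (fun p : ℝ × ℝ =>
      (1 - p.2 ^ 2) * (p.1 ^ 2 + 2 * c₀ ^ 2 * p.2 ^ 2)
        - 2 * 1 * 𝔥 (p.1 * p.2 * (Real.sqrt (c₀ ^ 2 * p.2 ^ 2 + p.1 ^ 2))⁻¹)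
          * Real.sqrt (1 - p.2 ^ 2) * (c₀ ^ 2 * p.2 ^ 2 + p.1 ^ 2) ^ ((3 : ℝ) / 2))
      ((2 * x₀ - 6 * 𝔥 0 * x₀ ^ 2) • L₁) pt :=
    (hAB.sub hC3).congr_fderiv
      (by refine ContinuousLinearMap.ext fun p => ?_
          simp
          ring)
  -- denominator
  have hden : HasFDerivAt (fun p : ℝ × ℝ => p.1 ^ 3 + c₀ ^ 2 * p.1)
      ((3 * x₀ ^ 2 + c₀ ^ 2) • L₁) pt :=
    (((hasDerivAt_pow 3 x₀).comp_hasFDerivAt_of_eq pt hfst rfl).add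
      (hfst.const_mul (c₀ ^ 2))).congr_fderiv
      (by refine ContinuousLinearMap.ext fun p => ?_; simp; ring)
  have hdenne : x₀ ^ 3 + c₀ ^ 2 * x₀ ≠ 0 := by positivity
  have hdinv : HasFDerivAt (fun p : ℝ × ℝ => (p.1 ^ 3 + c₀ ^ 2 * p.1)⁻¹)
      ((-((x₀ ^ 3 + c₀ ^ 2 * x₀) ^ 2)⁻¹ * (3 * x₀ ^ 2 + c₀ ^ 2)) • L₁) pt :=
    ((hasDerivAt_inv hdenne).comp_hasFDerivAt_of_eq pt hden rfl).congr_fderiv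
      (by refine ContinuousLinearMap.ext fun p => ?_; simp; ring)
  -- the quotient
  have hF : HasFDerivAt (fun p : ℝ × ℝ =>
      ((1 - p.2 ^ 2) * (p.1 ^ 2 + 2 * c₀ ^ 2 * p.2 ^ 2)
        - 2 * 1 * 𝔥 (p.1 * p.2 * (Real.sqrt (c₀ ^ 2 * p.2 ^ 2 + p.1 ^ 2))⁻¹)
          * Real.sqrt (1 - p.2 ^ 2) * (c₀ ^ 2 * p.2 ^ 2 + p.1 ^ 2) ^ ((3 : ℝ) / 2))
        * (p.1 ^ 3 + c₀ ^ 2 * p.1)⁻¹)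
      ((-(4 * 𝔥 0 ^ 2 / (1 + 4 * c₀ ^ 2 * 𝔥 0 ^ 2))) • L₁) pt :=
    (hN.mul hdinv).congr_fderiv
      (by refine ContinuousLinearMap.ext fun p => ?_
          simp [hsq, h32, hptdef]
          rw [hx₀def]
          field_simp
          ring)
  -- assemble
  have hfull : HasFDerivAt (fun p : ℝ × ℝ =>
      (p.2,
        ((1 - p.2 ^ 2) * (p.1 ^ 2 + 2 * c₀ ^ 2 * p.2 ^ 2)
          - 2 * 1 * 𝔥 (p.1 * p.2 * (Real.sqrt (c₀ ^ 2 * p.2 ^ 2 + p.1 ^ 2))⁻¹)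
            * Real.sqrt (1 - p.2 ^ 2) * (c₀ ^ 2 * p.2 ^ 2 + p.1 ^ 2) ^ ((3 : ℝ) / 2))
          * (p.1 ^ 3 + c₀ ^ 2 * p.1)⁻¹))
      (L₂.prod ((-(4 * 𝔥 0 ^ 2 / (1 + 4 * c₀ ^ 2 * 𝔥 0 ^ 2))) • L₁)) pt := hsnd.prodMk hF
  have hfun : helicoidalField c₀ 1 𝔥 = (fun p : ℝ × ℝ =>
      (p.2,
        ((1 - p.2 ^ 2) * (p.1 ^ 2 + 2 * c₀ ^ 2 * p.2 ^ 2)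
          - 2 * 1 * 𝔥 (p.1 * p.2 * (Real.sqrt (c₀ ^ 2 * p.2 ^ 2 + p.1 ^ 2))⁻¹)
            * Real.sqrt (1 - p.2 ^ 2) * (c₀ ^ 2 * p.2 ^ 2 + p.1 ^ 2) ^ ((3 : ℝ) / 2))
          * (p.1 ^ 3 + c₀ ^ 2 * p.1)⁻¹)) := by
    funext p
    simp [helicoidalField, div_eq_mul_inv]
  rw [hfun]
  exact hfull

/-- The linearization of the helicoidal system (`ε = 1`) at the
equilibrium `e₀ = (1/(2𝔥(0)), 0)` is the linear map with matrix
`[[0, 1], [−4𝔥(0)²/(1 + 4c₀²𝔥(0)²), 0]]`, which has trace `0`, determinant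
`4𝔥(0)²/(1 + 4c₀²𝔥(0)²) > 0`, and purely imaginary eigenvalues
`±(2𝔥(0)/√(1 + 4c₀²𝔥(0)²))·i`. -/
theorem helicoidal_linearization_center (c₀ : ℝ) (hc₀ : c₀ ≠ 0) (𝔥 : ℝ → ℝ)
    (hC1 : ContDiffOn ℝ 1 𝔥 (Set.Icc (-1) 1))
    (h0 : 0 < 𝔥 0) (hd0 : deriv 𝔥 0 = 0) :
    let e₀ : ℝ × ℝ := (1 / (2 * 𝔥 0), 0)
    let k : ℝ := 4 * (𝔥 0) ^ 2 / (1 + 4 * c₀ ^ 2 * (𝔥 0) ^ 2)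
    let ω : ℝ := 2 * 𝔥 0 / Real.sqrt (1 + 4 * c₀ ^ 2 * (𝔥 0) ^ 2)
    DifferentiableAt ℝ (helicoidalField c₀ 1 𝔥) e₀ ∧
    (∀ p : ℝ × ℝ, fderiv ℝ (helicoidalField c₀ 1 𝔥) e₀ p = (p.2, -k * p.1)) ∧
    Matrix.trace !![(0 : ℝ), 1; -k, 0] = 0 ∧
    Matrix.det !![(0 : ℝ), 1; -k, 0] = k ∧
    0 < k ∧
    (∀ μ : ℂ,
      Polynomial.eval μ
          (Matrix.charpoly ((!![(0 : ℝ), 1; -k, 0]).map Complex.ofReal)) = 0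
        ↔ (μ = (ω : ℂ) * Complex.I ∨ μ = -((ω : ℂ) * Complex.I))) := by
  intro e₀ k ω
  have H := helicoidal_hasFDerivAt c₀ 𝔥 hC1 h0 hd0
  have hkpos : 0 < k := by
    simp only [k]
    exact div_pos (by nlinarith [mul_pos h0 h0]) (by positivity)
  have hωk : ω ^ 2 = k := by
    simp only [ω, k]
    rw [div_pow, Real.sq_sqrt (by positivity)]
    ring_nf
  refine ⟨H.differentiableAt, ?_, ?_, ?_, hkpos, ?_⟩
  · intro p
    show fderiv ℝ (helicoidalField c₀ 1 𝔥) ((1 / (2 * 𝔥 0), 0) : ℝ × ℝ) p = (p.2, -k * p.1)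
    rw [H.fderiv]
    simp only [ContinuousLinearMap.prod_apply, ContinuousLinearMap.smul_apply,
      ContinuousLinearMap.coe_fst', ContinuousLinearMap.coe_snd', smul_eq_mul, k]
  · simp [Matrix.trace_fin_two]
  · simp [Matrix.det_fin_two]
  · intro μ
    have hk' : ((ω : ℂ)) ^ 2 = ((k : ℝ) : ℂ) := by exact_mod_cast congrArg Complex.ofReal hωk
    have hcp : Matrix.charpoly ((!![(0 : ℝ), 1; -k, 0]).map Complex.ofReal)
        = Polynomial.X ^ 2 + Polynomial.C ((k : ℝ) : ℂ) := by
      rw [Matrix.charpoly, Matrix.det_fin_two]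
      rw [Matrix.charmatrix_apply_eq, Matrix.charmatrix_apply_eq,
        Matrix.charmatrix_apply_ne _ _ _ (by decide), Matrix.charmatrix_apply_ne _ _ _ (by decide)]
      simp [Matrix.map_apply]
      ring
    rw [hcp]
    simp only [Polynomial.eval_add, Polynomial.eval_pow, Polynomial.eval_X, Polynomial.eval_C]
    constructor
    · intro h
      have h2 : (μ - (ω : ℂ) * Complex.I) * (μ + (ω : ℂ) * Complex.I) = 0 := by
        linear_combination h + hk' - ((ω : ℂ)) ^ 2 * Complex.I_sq
      rcases mul_eq_zero.1 h2 with h3 | h3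
      · exact Or.inl (sub_eq_zero.1 h3)
      · exact Or.inr (eq_neg_of_add_eq_zero_left h3)
    · rintro (rfl | rfl)
      · linear_combination ((ω : ℂ)) ^ 2 * Complex.I_sq - hk'
      · linear_combination ((ω : ℂ)) ^ 2 * Complex.I_sq - hk'
end
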